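/- Let n ≥ 1 and λ_0,...,λ_n > 0, and let A(λ) be the associated (n+2)×(n+2) Jacobi matrix. Suppose e ∈ (0,1)^n satisfies the RFM steady-state equations, and set σ := (λ_n e_n)^{−1/2}. Then there exists a vector ζ ∈ ℝ^{n+2} with all entries positive such that A(λ)ζ = σζ and e_i = λ_i^{−1/2} σ^{−1} ζ_{i+2}/ζ_{i+1} for all i = 1,...,n. -/

import Mathlib

open scoped BigOperators

/-- Extended occupancy vector of an RFM chain with `N + 1` sites:
the input value `u` at the left boundary, the state in the middle,
and `0` at the right boundary. -/
noncomputable def rfmExt {N : ℕ} (u : ℝ) (x : Fin (N + 1) → ℝ) : Fin (N + 3) → ℝ :=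
  Fin.cons u (Fin.snoc x 0)

/-- The flow into site `j` (so `j = 0` is the entry flow `λ₀ u (1 - x₁)`,
`j` internal is `λ_j x_j (1 - x_{j+1})` in 1-based notation,
and `j = N + 1` is the exit flow `λ_n x_n`). -/
noncomputable def rfmFlow {N : ℕ} (lam : Fin (N + 2) → ℝ) (u : ℝ)
    (x : Fin (N + 1) → ℝ) (j : Fin (N + 2)) : ℝ :=
  lam j * rfmExt u x j.castSucc * (1 - rfmExt u x j.succ)

/-- The vector field of a single RFMIO chain with input `u`. -/
noncomputable def rfmVF {N : ℕ} (lam : Fin (N + 2) → ℝ) (u : ℝ)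
    (x : Fin (N + 1) → ℝ) (j : Fin (N + 1)) : ℝ :=
  rfmFlow lam u x j.castSucc - rfmFlow lam u x j.succ

/-- The steady-state equations of an RFM chain with input `u`: all flows are equal,
i.e. `λ₀ u (1-e₁) = λ₁ e₁ (1-e₂) = ⋯ = λ_n e_n`. -/
def rfmSS {N : ℕ} (lam : Fin (N + 2) → ℝ) (u : ℝ) (e : Fin (N + 1) → ℝ) : Prop :=
  ∀ j : Fin (N + 1), rfmFlow lam u e j.castSucc = rfmFlow lam u e j.succ

/-- The off-diagonal entry `λ_j^{-1/2}` of the Jacobi matrix (0-based rate index),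
defined for all natural `j` for convenience. -/
noncomputable def jacobiEntry {N : ℕ} (lam : Fin (N + 2) → ℝ) (j : ℕ) : ℝ :=
  if h : j < N + 2 then (Real.sqrt (lam ⟨j, h⟩))⁻¹ else 0

/-- The `(n+2) × (n+2)` symmetric tridiagonal Jacobi matrix associated with an RFM
with `n = N + 1` sites and rates `λ₀, …, λ_n`: zero diagonal and off-diagonal entries
`A_{i,i+1} = A_{i+1,i} = λ_{i-1}^{-1/2}` (1-based indexing). -/
noncomputable def jacobiMat {N : ℕ} (lam : Fin (N + 2) → ℝ) :
    Matrix (Fin (N + 3)) (Fin (N + 3)) ℝ :=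
  fun p q =>
    if (p : ℕ) + 1 = (q : ℕ) then jacobiEntry lam p
    else if (q : ℕ) + 1 = (p : ℕ) then jacobiEntry lam q
    else 0

/-- nat-indexed extended occupancy -/
noncomputable def extNat {N : ℕ} (e : Fin (N + 1) → ℝ) : ℕ → ℝ :=
  fun k => if k = 0 then 1 else if h : k - 1 < N + 1 then e ⟨k - 1, h⟩ else 0

noncomputable def gNat {N : ℕ} (lam : Fin (N + 2) → ℝ) (e : Fin (N + 1) → ℝ) : ℕ → ℝ :=
  fun k => if h : k < N + 2 then Real.sqrt (lam ⟨k, h⟩) * extNat e k else 1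

noncomputable def zetaAux (σ : ℝ) (g : ℕ → ℝ) : ℕ → ℝ
  | 0 => 1
  | k + 1 => σ * g k * zetaAux σ g k

lemma zetaAux_zero (σ : ℝ) (g : ℕ → ℝ) : zetaAux σ g 0 = 1 := rfl

lemma zetaAux_succ (σ : ℝ) (g : ℕ → ℝ) (k : ℕ) :
    zetaAux σ g (k + 1) = σ * g k * zetaAux σ g k := rfl

lemma extNat_pos {N : ℕ} {e : Fin (N + 1) → ℝ} (he : ∀ j, 0 < e j) (k : ℕ)
    (hk : k < N + 2) : 0 < extNat e k := by
  unfold extNat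
  rcases Nat.eq_zero_or_pos k with h | h
  · simp [h]
  · have h1 : ¬ (k = 0) := by omega
    have h2 : k - 1 < N + 1 := by omega
    simp only [h1, if_false, dif_pos h2]
    exact he _

lemma gNat_pos {N : ℕ} {lam : Fin (N + 2) → ℝ} {e : Fin (N + 1) → ℝ}
    (hlam : ∀ j, 0 < lam j) (he : ∀ j, 0 < e j) (k : ℕ) : 0 < gNat lam e k := by
  unfold gNat
  by_cases h : k < N + 2
  · rw [dif_pos h]
    exact mul_pos (Real.sqrt_pos.2 (hlam _)) (extNat_pos he k h)
  · rw [dif_neg h]; norm_num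

lemma zetaAux_pos {σ : ℝ} {g : ℕ → ℝ} (hσ : 0 < σ) (hg : ∀ k, 0 < g k) (k : ℕ) :
    0 < zetaAux σ g k := by
  induction k with
  | zero => norm_num [zetaAux]
  | succ k ih => exact mul_pos (mul_pos hσ (hg k)) ih

lemma rfmExt_cast {N : ℕ} (e : Fin (N + 1) → ℝ) (k : ℕ) (hk : k < N + 3) :
    rfmExt 1 e ⟨k, hk⟩ = extNat e k := by
  unfold rfmExt extNat
  rcases k with _ | m
  · simp [Fin.cons_zero]
  · have hm : (⟨m + 1, hk⟩ : Fin (N + 3)) = Fin.succ ⟨m, by omega⟩ := rfl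
    rw [hm, Fin.cons_succ]
    by_cases hm' : m < N + 1
    · have : (⟨m, by omega⟩ : Fin (N + 2)) = Fin.castSucc ⟨m, hm'⟩ := rfl
      rw [this, Fin.snoc_castSucc]
      simp [hm']
    · have hmN : m = N + 1 := by omega
      subst hmN
      have : (⟨N + 1, by omega⟩ : Fin (N + 2)) = Fin.last (N + 1) := rfl
      rw [this, Fin.snoc_last]
      simp

lemma jacobi_mulVec {N : ℕ} (lam : Fin (N + 2) → ℝ) (ζ : Fin (N + 3) → ℝ)
    (p : Fin (N + 3)) :
    (jacobiMat lam).mulVec ζ p =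
      (if h : (p : ℕ) + 1 < N + 3 then jacobiEntry lam p * ζ ⟨(p : ℕ) + 1, h⟩ else 0) +
      (if h : 0 < (p : ℕ) then
        jacobiEntry lam ((p : ℕ) - 1) * ζ ⟨(p : ℕ) - 1, by omega⟩ else 0) := by
  unfold Matrix.mulVec dotProduct jacobiMat
  have hsplit : ∀ q : Fin (N + 3),
      (if (p : ℕ) + 1 = (q : ℕ) then jacobiEntry lam p
       else if (q : ℕ) + 1 = (p : ℕ) then jacobiEntry lam q else 0) * ζ q
      = (if (p : ℕ) + 1 = (q : ℕ) then jacobiEntry lam p * ζ q else 0)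
      + (if (q : ℕ) + 1 = (p : ℕ) then jacobiEntry lam q * ζ q else 0) := by
    intro q
    by_cases h1 : (p : ℕ) + 1 = (q : ℕ)
    · have h2 : ¬ ((q : ℕ) + 1 = (p : ℕ)) := by omega
      simp [h1, h2]
    · by_cases h2 : (q : ℕ) + 1 = (p : ℕ) <;> simp [h1, h2]
  simp only [hsplit, Finset.sum_add_distrib]
  congr 1
  · by_cases h : (p : ℕ) + 1 < N + 3
    · rw [dif_pos h, Finset.sum_eq_single (⟨(p : ℕ) + 1, h⟩ : Fin (N + 3))]
      · simp
      · intro q _ hq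
        rw [if_neg]
        intro hc
        exact hq (Fin.ext hc.symm)
      · simp
    · rw [dif_neg h, Finset.sum_eq_zero]
      intro q _
      rw [if_neg]
      have := q.isLt
      omega
  · by_cases h : 0 < (p : ℕ)
    · rw [dif_pos h, Finset.sum_eq_single (⟨(p : ℕ) - 1, by omega⟩ : Fin (N + 3))]
      · have : ((⟨(p : ℕ) - 1, by omega⟩ : Fin (N + 3)) : ℕ) + 1 = (p : ℕ) := by
          simp; omega
        rw [if_pos this]
      · intro q _ hq
        rw [if_neg]
        intro hc
        apply hq
        apply Fin.ext
        show (q : ℕ) = (p : ℕ) - 1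
        omega
      · simp
    · rw [dif_neg h, Finset.sum_eq_zero]
      intro q _
      rw [if_neg]
      omega

/-- If `e ∈ (0,1)^n` satisfies the RFM steady-state equations and
`σ := (λ_n e_n)^{-1/2}`, then there is a positive vector `ζ` with `A(λ) ζ = σ ζ` and
`e_i = λ_i^{-1/2} σ^{-1} ζ_{i+2} / ζ_{i+1}` for all `i`. -/
theorem steady_state_gives_spectral_representation
    (N : ℕ) (lam : Fin (N + 2) → ℝ) (hlam : ∀ j, 0 < lam j)
    (e : Fin (N + 1) → ℝ) (he : ∀ j, e j ∈ Set.Ioo (0 : ℝ) 1)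
    (heq : rfmSS lam 1 e)
    (σ : ℝ) (hσ : σ = (Real.sqrt (lam (Fin.last (N + 1)) * e (Fin.last N)))⁻¹) :
    ∃ ζ : Fin (N + 3) → ℝ,
      (∀ k, 0 < ζ k) ∧ (jacobiMat lam).mulVec ζ = σ • ζ ∧
      ∀ j : Fin (N + 1),
        e j = (Real.sqrt (lam j.succ))⁻¹ * σ⁻¹ * (ζ j.succ.succ / ζ j.succ.castSucc) := by
  have hepos : ∀ j, 0 < e j := fun j => (he j).1
  have hr : 0 < lam (Fin.last (N + 1)) * e (Fin.last N) :=
    mul_pos (hlam _) (hepos _)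
  have hσpos : 0 < σ := by
    rw [hσ]
    exact inv_pos.2 (Real.sqrt_pos.2 hr)
  have hσsq : σ ^ 2 * (lam (Fin.last (N + 1)) * e (Fin.last N)) = 1 := by
    rw [hσ, ← Real.sqrt_inv, Real.sq_sqrt (by positivity)]
    field_simp
    exact div_self (ne_of_gt hr)
  -- chain of equal flows
  have hchain : ∀ k (h : k < N + 2),
      rfmFlow lam 1 e ⟨k, h⟩ = rfmFlow lam 1 e ⟨0, by omega⟩ := by
    intro k
    induction k with
    | zero => intro h; rfl
    | succ k ih =>
      intro h
      have hk : k < N + 1 := by omega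
      have hstep := heq ⟨k, hk⟩
      have h1 : (⟨k, hk⟩ : Fin (N + 1)).castSucc = (⟨k, by omega⟩ : Fin (N + 2)) := rfl
      have h2 : (⟨k, hk⟩ : Fin (N + 1)).succ = (⟨k + 1, h⟩ : Fin (N + 2)) := rfl
      rw [h1, h2] at hstep
      rw [← hstep]
      exact ih (by omega)
  have hflowval : ∀ k (h : k < N + 2),
      rfmFlow lam 1 e ⟨k, h⟩ = lam ⟨k, h⟩ * extNat e k * (1 - extNat e (k + 1)) := by
    intro k h
    unfold rfmFlow
    have c1 : ((⟨k, h⟩ : Fin (N + 2)).castSucc) = (⟨k, by omega⟩ : Fin (N + 3)) := rfl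
    have c2 : ((⟨k, h⟩ : Fin (N + 2)).succ) = (⟨k + 1, by omega⟩ : Fin (N + 3)) := rfl
    rw [c1, c2, rfmExt_cast e k (by omega), rfmExt_cast e (k + 1) (by omega)]
  have hlast : rfmFlow lam 1 e ⟨N + 1, by omega⟩
      = lam (Fin.last (N + 1)) * e (Fin.last N) := by
    rw [hflowval (N + 1) (by omega)]
    have h1 : extNat e (N + 1) = e (Fin.last N) := by
      unfold extNat
      have : ¬ (N + 1 = 0) := by omega
      simp only [this, if_false, Nat.add_sub_cancel, dif_pos (by omega : N < N + 1)]
      rfl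
    have h2 : extNat e (N + 2) = 0 := by
      unfold extNat
      have h3 : ¬ (N + 2 = 0) := by omega
      have h4 : ¬ (N + 2 - 1 < N + 1) := by omega
      simp [h3, h4]
    have h5 : (⟨N + 1, by omega⟩ : Fin (N + 2)) = Fin.last (N + 1) := rfl
    rw [h1, h2, h5]
    ring
  have hflow : ∀ k (h : k < N + 2),
      lam ⟨k, h⟩ * extNat e k * (1 - extNat e (k + 1))
        = lam (Fin.last (N + 1)) * e (Fin.last N) := by
    intro k h
    rw [← hflowval k h, hchain k h, ← hchain (N + 1) (by omega), hlast]
  have hkey : ∀ k (h : k < N + 2),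
      σ ^ 2 * (lam ⟨k, h⟩ * extNat e k * (1 - extNat e (k + 1))) = 1 := by
    intro k h
    rw [hflow k h]
    exact hσsq
  -- the eigenvector
  set g : ℕ → ℝ := gNat lam e with hg
  set f : ℕ → ℝ := zetaAux σ g with hf
  have hgpos : ∀ k, 0 < g k := gNat_pos hlam hepos
  have hfpos : ∀ k, 0 < f k := zetaAux_pos hσpos hgpos
  have hgval : ∀ k (h : k < N + 2),
      g k = Real.sqrt (lam ⟨k, h⟩) * extNat e k := by
    intro k h
    rw [hg]
    unfold gNat
    rw [dif_pos h]
  refine ⟨fun p => f (p : ℕ), fun p => hfpos _, ?_, ?_⟩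
  · funext p
    rw [jacobi_mulVec]
    simp only [Pi.smul_apply, smul_eq_mul]
    obtain ⟨pv, hpv⟩ := p
    simp only
    have hsqrt_ne : ∀ (j : Fin (N + 2)), Real.sqrt (lam j) ≠ 0 :=
      fun j => ne_of_gt (Real.sqrt_pos.2 (hlam j))
    rcases pv with _ | k
    · -- row 0
      rw [dif_pos (by omega : 0 + 1 < N + 3), dif_neg (by omega)]
      unfold jacobiEntry
      rw [dif_pos (by omega : 0 < N + 2)]
      have hthis : f (0 + 1) = σ * g 0 * f 0 := zetaAux_succ σ g 0
      have hf0 : f 0 = 1 := rfl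
      rw [hthis, hgval 0 (by omega), hf0]
      have hE0 : extNat e 0 = 1 := by unfold extNat; simp
      rw [hE0]
      field_simp
      rw [add_zero, mul_div_right_comm, div_self (hsqrt_ne _), one_mul]
    · by_cases hk : k < N + 1
      · -- middle rows
        rw [dif_pos (by omega : (k + 1) + 1 < N + 3), dif_pos (by omega : 0 < k + 1)]
        simp only [Nat.add_sub_cancel]
        unfold jacobiEntry
        rw [dif_pos (by omega : k + 1 < N + 2), dif_pos (by omega : k < N + 2)]
        have e2 : f (k + 2) = σ * g (k + 1) * f (k + 1) := zetaAux_succ σ g (k + 1)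
        have e1 : f (k + 1) = σ * g k * f k := zetaAux_succ σ g k
        rw [e2, e1, hgval (k + 1) (by omega), hgval k (by omega)]
        have hk1 := hkey k (by omega)
        rw [← Real.sq_sqrt (hlam ⟨k, by omega⟩).le] at hk1
        have hs0 := hsqrt_ne ⟨k, by omega⟩
        have hs1 := hsqrt_ne ⟨k + 1, by omega⟩
        field_simp
        linear_combination (-(f k)) * hk1
      · -- last row
        have hkN : k = N + 1 := by omega
        subst hkN
        rw [dif_neg (by omega), dif_pos (by omega : 0 < N + 1 + 1)]
        simp only [Nat.add_sub_cancel]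
        unfold jacobiEntry
        rw [dif_pos (by omega : N + 1 < N + 2)]
        have e2 : f (N + 2) = σ * g (N + 1) * f (N + 1) := zetaAux_succ σ g (N + 1)
        rw [e2, hgval (N + 1) (by omega)]
        have hE : extNat e (N + 1) = e (Fin.last N) := by
          unfold extNat
          have : ¬ (N + 1 = 0) := by omega
          simp only [this, if_false, Nat.add_sub_cancel, dif_pos (by omega : N < N + 1)]
          rfl
        rw [hE]
        have hk1 := hσsq
        have hlf : (⟨N + 1, by omega⟩ : Fin (N + 2)) = Fin.last (N + 1) := rfl
        rw [hlf]
        rw [← Real.sq_sqrt (hlam (Fin.last (N + 1))).le] at hk1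
        have hs0 := hsqrt_ne (Fin.last (N + 1))
        field_simp
        linear_combination (-(f (N + 1))) * hk1
  · intro j
    have hv2 : ((j.succ.succ : Fin (N + 3)) : ℕ) = (j : ℕ) + 2 := by
      simp [Fin.val_succ]
    have hv1 : ((j.succ.castSucc : Fin (N + 3)) : ℕ) = (j : ℕ) + 1 := by
      simp [Fin.val_succ]
    simp only [hv2, hv1]
    have e2 : f ((j : ℕ) + 2) = σ * g ((j : ℕ) + 1) * f ((j : ℕ) + 1) :=
      zetaAux_succ σ g _
    have hgj : g ((j : ℕ) + 1) = Real.sqrt (lam j.succ) * e j := by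
      rw [hgval ((j : ℕ) + 1) (by omega)]
      have hE : extNat e ((j : ℕ) + 1) = e j := by
        unfold extNat
        have h1 : ¬ ((j : ℕ) + 1 = 0) := by omega
        simp only [h1, if_false, Nat.add_sub_cancel, dif_pos j.isLt]
      have hlj : (⟨(j : ℕ) + 1, by omega⟩ : Fin (N + 2)) = j.succ := rfl
      rw [hE, hlj]
    rw [e2, hgj]
    have hfne : f ((j : ℕ) + 1) ≠ 0 := ne_of_gt (hfpos _)
    have hs : Real.sqrt (lam j.succ) ≠ 0 := ne_of_gt (Real.sqrt_pos.2 (hlam _))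
    field_simp
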